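/- For every real λ > 0, every natural number m ≥ 1, every real v ≥ 0 and every complex s with s ≠ λ: ∫_0^∞ e^{-s·max(v−y,0)} (λ^m y^{m−1} e^{-λ y}/(m−1)!) dy = (λ/(λ−s))^m e^{-s v} − (λ/(λ−s))^m e^{-λ v} Σ_{l=0}^{m−1} ((λ−s) v)^l / l! + e^{-λ v} Σ_{l=0}^{m−1} (λ v)^l / l!. -/

import Mathlib

open MeasureTheory Set

lemma cderiv (a : ℂ) (n : ℕ) (z : ℂ) :
    HasDerivAt (fun z : ℂ => -Complex.exp (-a*z) * ∑ l ∈ Finset.range (n+1),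
        (a*z)^l / (Nat.factorial l : ℂ))
      (a * Complex.exp (-a*z) * ((a*z)^n / (Nat.factorial n : ℂ))) z := by
  have h1 : HasDerivAt (fun z : ℂ => Complex.exp (-a*z)) (Complex.exp (-a*z) * (-a)) z := by
    simpa using ((hasDerivAt_id z).const_mul (-a)).cexp
  have h2 : ∀ l ∈ Finset.range (n+1), HasDerivAt (fun z : ℂ => (a*z)^l / (Nat.factorial l : ℂ))
      (((l : ℂ) * (a*z)^(l-1) * a) / (Nat.factorial l : ℂ)) z := by
    intro l _
    exact (((hasDerivAt_id z).const_mul a).pow l).div_const _ |>.congr_deriv (by simp)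
  have hS := HasDerivAt.sum h2
  have := (h1.neg).mul hS
  convert this using 1
  · rfl
  · rfl
  · ext w
    simp [Finset.sum_apply]
  have hT : (∑ l ∈ Finset.range (n+1), ((l:ℂ) * (a*z)^(l-1) * a) / (Nat.factorial l : ℂ))
      = a * ∑ l ∈ Finset.range n, (a*z)^l / (Nat.factorial l : ℂ) := by
    rw [Finset.sum_range_succ', Finset.mul_sum]
    simp only [Nat.cast_zero, zero_mul, Nat.factorial_zero, Nat.cast_one, div_one, add_zero,
      Nat.add_sub_cancel]
    refine Finset.sum_congr rfl fun i _ => ?_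
    rw [Nat.factorial_succ]
    push_cast
    have hi : (i : ℂ) + 1 ≠ 0 := Nat.cast_add_one_ne_zero i
    have hf : (Nat.factorial i : ℂ) ≠ 0 := Nat.cast_ne_zero.mpr (Nat.factorial_ne_zero i)
    field_simp
  rw [hT, Finset.sum_range_succ]
  simp only [Finset.sum_apply, Pi.add_apply, Pi.neg_apply]
  ring

lemma rderiv (a : ℝ) (n : ℕ) (z : ℝ) :
    HasDerivAt (fun z : ℝ => -Real.exp (-a*z) * ∑ l ∈ Finset.range (n+1),
        (a*z)^l / (Nat.factorial l : ℝ))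
      (a * Real.exp (-a*z) * ((a*z)^n / (Nat.factorial n : ℝ))) z := by
  have h1 : HasDerivAt (fun z : ℝ => Real.exp (-a*z)) (Real.exp (-a*z) * (-a)) z := by
    simpa using ((hasDerivAt_id z).const_mul (-a)).exp
  have h2 : ∀ l ∈ Finset.range (n+1), HasDerivAt (fun z : ℝ => (a*z)^l / (Nat.factorial l : ℝ))
      (((l : ℝ) * (a*z)^(l-1) * a) / (Nat.factorial l : ℝ)) z := by
    intro l _
    exact (((hasDerivAt_id z).const_mul a).pow l).div_const _ |>.congr_deriv (by simp)
  have hS := HasDerivAt.sum h2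
  have := (h1.neg).mul hS
  convert this using 1
  · rfl
  · rfl
  · ext w
    simp [Finset.sum_apply]
  have hT : (∑ l ∈ Finset.range (n+1), ((l:ℝ) * (a*z)^(l-1) * a) / (Nat.factorial l : ℝ))
      = a * ∑ l ∈ Finset.range n, (a*z)^l / (Nat.factorial l : ℝ) := by
    rw [Finset.sum_range_succ', Finset.mul_sum]
    simp only [Nat.cast_zero, zero_mul, Nat.factorial_zero, Nat.cast_one, div_one, add_zero,
      Nat.add_sub_cancel]
    refine Finset.sum_congr rfl fun i _ => ?_
    rw [Nat.factorial_succ]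
    push_cast
    have hi : (i : ℝ) + 1 ≠ 0 := Nat.cast_add_one_ne_zero i
    have hf : (Nat.factorial i : ℝ) ≠ 0 := Nat.cast_ne_zero.mpr (Nat.factorial_ne_zero i)
    field_simp
  rw [hT, Finset.sum_range_succ]
  simp only [Finset.sum_apply, Pi.add_apply, Pi.neg_apply]
  ring

lemma key (a : ℂ) (ha : a ≠ 0) (n : ℕ) (v : ℝ) :
    ∫ y in (0:ℝ)..v, (y:ℂ)^n * Complex.exp (-a*y)
      = ((Nat.factorial n : ℂ) / a^(n+1)) *
          (1 - Complex.exp (-a*v) * ∑ l ∈ Finset.range (n+1), (a*v)^l / (Nat.factorial l : ℂ)) := by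
  set F : ℝ → ℂ := fun y => ((Nat.factorial n : ℂ) / a^(n+1)) *
      (-Complex.exp (-a*y) * ∑ l ∈ Finset.range (n+1), (a*(y:ℂ))^l / (Nat.factorial l : ℂ)) with hF
  have hd : ∀ y : ℝ, HasDerivAt F ((y:ℂ)^n * Complex.exp (-a*y)) y := by
    intro y
    have := ((cderiv a n (y:ℂ)).comp_ofReal).const_mul ((Nat.factorial n : ℂ) / a^(n+1))
    convert this using 1
    · rfl
    have hf : (Nat.factorial n : ℂ) ≠ 0 := Nat.cast_ne_zero.mpr (Nat.factorial_ne_zero n)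
    field_simp
    rw [mul_pow, pow_succ]
    ring
  have hcont : Continuous fun y : ℝ => (y:ℂ)^n * Complex.exp (-a*y) := by
    fun_prop
  have := intervalIntegral.integral_eq_sub_of_hasDerivAt (f := F)
    (fun y _ => hd y) (hcont.intervalIntegrable 0 v)
  rw [this, hF]
  have h0 : (∑ l ∈ Finset.range (n+1), (0:ℂ)^l / (Nat.factorial l : ℂ)) = 1 := by
    rw [Finset.sum_range_succ']
    simp
  simp only [Complex.ofReal_zero, mul_zero, neg_zero, Complex.exp_zero]
  rw [h0]
  ring

lemma tail (lam : ℝ) (hlam : 0 < lam) (n : ℕ) (v : ℝ) (hv : 0 ≤ v) :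
    IntegrableOn (fun y : ℝ => lam^(n+1) * y^n * Real.exp (-lam*y) / (Nat.factorial n : ℝ))
        (Ioi v) ∧
    ∫ y in Ioi v, lam^(n+1) * y^n * Real.exp (-lam*y) / (Nat.factorial n : ℝ)
      = Real.exp (-lam*v) * ∑ l ∈ Finset.range (n+1), (lam*v)^l / (Nat.factorial l : ℝ) := by
  set G : ℝ → ℝ := fun y => -Real.exp (-lam*y) * ∑ l ∈ Finset.range (n+1),
      (lam*y)^l / (Nat.factorial l : ℝ) with hGdef
  have hd : ∀ y : ℝ, HasDerivAt G
      (lam^(n+1) * y^n * Real.exp (-lam*y) / (Nat.factorial n : ℝ)) y := by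
    intro y
    have := rderiv lam n y
    convert this using 1
    rw [mul_pow, pow_succ]
    ring
  have hpos : ∀ y ∈ Ioi v, 0 ≤ lam^(n+1) * y^n * Real.exp (-lam*y) / (Nat.factorial n : ℝ) := by
    intro y hy
    have hy0 : 0 ≤ y := le_trans hv (le_of_lt hy)
    positivity
  have hatTop : Filter.Tendsto (fun y : ℝ => lam * y) Filter.atTop Filter.atTop :=
    Filter.Tendsto.const_mul_atTop hlam Filter.tendsto_id
  have ht : ∀ l : ℕ, Filter.Tendsto
      (fun y : ℝ => Real.exp (-lam*y) * (lam*y)^l / (Nat.factorial l : ℝ))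
      Filter.atTop (nhds 0) := by
    intro l
    have h := (Real.tendsto_pow_mul_exp_neg_atTop_nhds_zero l).comp hatTop
    have : Filter.Tendsto (fun y : ℝ => (lam*y)^l * Real.exp (-(lam*y))) Filter.atTop (nhds 0) := h
    simpa [neg_mul, mul_comm, zero_div] using this.div_const (Nat.factorial l : ℝ)
  have hsum : Filter.Tendsto
      (fun y : ℝ => ∑ l ∈ Finset.range (n+1),
        Real.exp (-lam*y) * (lam*y)^l / (Nat.factorial l : ℝ)) Filter.atTop (nhds 0) := by
    have := tendsto_finset_sum (Finset.range (n+1)) (fun l _ => ht l)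
    simpa using this
  have hG : Filter.Tendsto G Filter.atTop (nhds 0) := by
    have := hsum.neg
    simp only [neg_zero] at this
    refine this.congr fun y => ?_
    rw [hGdef]
    simp only [neg_mul, neg_inj, Finset.mul_sum, mul_div_assoc, ← Finset.sum_neg_distrib]
  refine ⟨integrableOn_Ioi_deriv_of_nonneg' (fun y _ => hd y) hpos hG, ?_⟩
  rw [integral_Ioi_of_hasDerivAt_of_nonneg' (fun y _ => hd y) hpos hG, hGdef]
  ring

theorem stmt_6 (lam : ℝ) (hlam : 0 < lam) (m : ℕ) (hm : 1 ≤ m)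
    (v : ℝ) (hv : 0 ≤ v) (s : ℂ) (hs : s ≠ (lam : ℂ)) :
    (∫ y in Set.Ioi (0:ℝ),
        (Complex.exp (-s * (max (v - y) 0 : ℝ)) *
          (lam ^ m * y ^ (m - 1) * Real.exp (-lam * y) / (Nat.factorial (m - 1)) : ℝ) : ℂ))
      = ((lam : ℂ) / ((lam : ℂ) - s)) ^ m * Complex.exp (-s * v)
        - ((lam : ℂ) / ((lam : ℂ) - s)) ^ m * Complex.exp (-(lam : ℂ) * v) *
            ∑ l ∈ Finset.range m, (((lam : ℂ) - s) * v) ^ l / (Nat.factorial l : ℂ)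
        + Complex.exp (-(lam : ℂ) * v) *
            ∑ l ∈ Finset.range m, ((lam : ℂ) * v) ^ l / (Nat.factorial l : ℂ) := by
  obtain ⟨n, rfl⟩ : ∃ n, m = n + 1 := ⟨m - 1, (Nat.succ_pred_eq_of_pos hm).symm⟩
  simp only [Nat.add_sub_cancel]
  set a : ℂ := (lam : ℂ) - s with ha
  have ha0 : a ≠ 0 := sub_ne_zero.mpr (Ne.symm hs)
  set f : ℝ → ℂ := fun y => Complex.exp (-s * (max (v - y) 0 : ℝ)) *
      ((lam ^ (n+1) * y ^ n * Real.exp (-lam * y) / (Nat.factorial n : ℝ) : ℝ) : ℂ) with hfdef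
  obtain ⟨hint, hval⟩ := tail lam hlam n v hv
  -- on Ioi v, f equals the cast of the real density
  have hEq : EqOn f (fun y : ℝ =>
      ((lam ^ (n+1) * y ^ n * Real.exp (-lam * y) / (Nat.factorial n : ℝ) : ℝ) : ℂ)) (Ioi v) := by
    intro y hy
    have hmax : max (v - y) 0 = 0 := max_eq_right (by linarith [mem_Ioi.mp hy])
    simp [hfdef, hmax]
  have hintC : IntegrableOn (fun y : ℝ =>
      ((lam ^ (n+1) * y ^ n * Real.exp (-lam * y) / (Nat.factorial n : ℝ) : ℝ) : ℂ)) (Ioi v) :=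
    hint.ofReal
  have hfIoi : IntegrableOn f (Ioi v) :=
    (IntegrableOn.congr_fun hintC hEq.symm measurableSet_Ioi)
  have hfcont : Continuous f := by
    rw [hfdef]
    fun_prop
  have hfIoc : IntegrableOn f (Ioc 0 v) := hfcont.integrableOn_Ioc
  rw [← Ioc_union_Ioi_eq_Ioi hv,
    setIntegral_union (Ioc_disjoint_Ioi le_rfl) measurableSet_Ioi hfIoc hfIoi]
  -- tail part
  have htail : ∫ y in Ioi v, f y
      = ((Real.exp (-lam*v) * ∑ l ∈ Finset.range (n+1), (lam*v)^l / (Nat.factorial l : ℝ) : ℝ) : ℂ) := by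
    rw [setIntegral_congr_fun measurableSet_Ioi hEq, ← hval]
    exact integral_ofReal
  -- front part
  have hfront : ∫ y in Ioc 0 v, f y
      = (Complex.exp (-s*v) * ((lam:ℂ)^(n+1) / (Nat.factorial n : ℂ))) *
          (((Nat.factorial n : ℂ) / a^(n+1)) *
            (1 - Complex.exp (-a*v) * ∑ l ∈ Finset.range (n+1), (a*v)^l / (Nat.factorial l : ℂ))) := by
    have hEq2 : EqOn f (fun y : ℝ =>
        (Complex.exp (-s*v) * ((lam:ℂ)^(n+1) / (Nat.factorial n : ℂ))) *
          ((y:ℂ)^n * Complex.exp (-a*y))) (Ioc 0 v) := by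
      intro y hy
      have hmax : max (v - y) 0 = v - y := max_eq_left (sub_nonneg.mpr hy.2)
      have hexp : Complex.exp (-s*((v:ℂ)-y)) * Complex.exp (-(lam:ℂ)*y)
          = Complex.exp (-s*v) * Complex.exp (-a*y) := by
        rw [← Complex.exp_add, ← Complex.exp_add]
        congr 1
        rw [ha]
        ring
      simp only [hfdef, hmax]
      push_cast
      linear_combination ((lam:ℂ)^(n+1) * (y:ℂ)^n / (Nat.factorial n : ℂ)) * hexp
    rw [setIntegral_congr_fun measurableSet_Ioc hEq2, integral_const_mul,
      ← intervalIntegral.integral_of_le hv, key a ha0 n v]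
  have hsc : ∀ X : ℂ, Complex.exp (-s*(v:ℂ)) * ((lam:ℂ)^(n+1)/(Nat.factorial n : ℂ)) *
      (((Nat.factorial n : ℂ))/a^(n+1) * X)
      = (lam:ℂ)^(n+1)/a^(n+1) * (Complex.exp (-s*(v:ℂ)) * X) := by
    intro X
    have hnf : (Nat.factorial n : ℂ) ≠ 0 := Nat.cast_ne_zero.mpr (Nat.factorial_ne_zero n)
    field_simp
  rw [htail, hfront, hsc]
  -- final algebra
  have hE : Complex.exp (-(s*(v:ℂ))) * Complex.exp (-(a*(v:ℂ))) = Complex.exp (-((lam:ℂ)*(v:ℂ))) := by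
    rw [← Complex.exp_add]
    congr 1
    rw [ha]
    ring
  have hnf : (Nat.factorial n : ℂ) ≠ 0 := Nat.cast_ne_zero.mpr (Nat.factorial_ne_zero n)
  push_cast
  simp only [neg_mul]
  rw [div_pow]
  linear_combination (-(lam:ℂ)^(n+1)/a^(n+1) *
    ∑ l ∈ Finset.range (n+1), (a*(v:ℂ))^l / (Nat.factorial l : ℂ)) * hE
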